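/- Let m ≥ 1 and let A be the m×m WSGD Toeplitz matrix built from the weights w_k for (p,q)=(1,-1) of order α. If 1 ≤ α ≤ 2, then every complex eigenvalue λ of A satisfies Re(λ) < 0. If moreover 1 < α ≤ 2, then A is negative definite, i.e., xᵀ A x < 0 for every nonzero x ∈ ℝ^m. -/

import Mathlib

open Matrix

/-- Grünwald coefficients `g_k = (-1)^k * binom(α, k)`. -/
noncomputable def gru (α : ℝ) (k : ℕ) : ℝ :=
  (-1 : ℝ) ^ k * (∏ i ∈ Finset.range k, (α - (i : ℝ))) / (Nat.factorial k : ℝ)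

/-- WSGD weights for `(p,q) = (1,0)`. -/
noncomputable def w10 (α : ℝ) : ℕ → ℝ
  | 0 => α / 2 * gru α 0
  | k + 1 => α / 2 * gru α (k + 1) + (2 - α) / 2 * gru α k

/-- WSGD weights for `(p,q) = (1,-1)`. -/
noncomputable def w1m1 (α : ℝ) : ℕ → ℝ
  | 0 => (2 + α) / 4 * gru α 0
  | 1 => (2 + α) / 4 * gru α 1
  | k + 2 => (2 + α) / 4 * gru α (k + 2) + (2 - α) / 4 * gru α k

/-- The m×m WSGD Toeplitz matrix: `A i j = w (i - j + 1)` when `i - j + 1 ≥ 0`, else `0`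
(0-based indices give the same entries as the 1-based description). -/
noncomputable def wsgdMatrix (w : ℕ → ℝ) (m : ℕ) : Matrix (Fin m) (Fin m) ℝ :=
  Matrix.of fun i j => if (j : ℕ) ≤ (i : ℕ) + 1 then w ((i : ℕ) + 1 - (j : ℕ)) else 0

open Finset

lemma gru_zero (α : ℝ) : gru α 0 = 1 := by simp [gru]

lemma gru_one (α : ℝ) : gru α 1 = -α := by simp [gru]

lemma gru_succ (α : ℝ) (k : ℕ) :
    gru α (k + 1) = gru α k * (((k : ℝ) - α) / (k + 1)) := by
  have hk : (Nat.factorial k : ℝ) ≠ 0 := by exact_mod_cast (Nat.factorial_pos k).ne'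
  have hk1 : ((k : ℝ) + 1) ≠ 0 := by positivity
  simp only [gru, Finset.prod_range_succ, Nat.factorial_succ, pow_succ]
  push_cast
  field_simp
  ring

lemma gru_rel (α : ℝ) (k : ℕ) : α * gru (α - 1) k = (α - k) * gru α k := by
  have h : α * ∏ i ∈ Finset.range k, (α - 1 - (i : ℝ))
      = (α - k) * ∏ i ∈ Finset.range k, (α - (i : ℝ)) := by
    have h1 := Finset.prod_range_succ' (fun i => α - (i : ℝ)) k
    rw [Finset.prod_range_succ] at h1
    push_cast at h1
    have h2 : ∀ i ∈ Finset.range k, α - ((i:ℝ) + 1) = α - 1 - (i:ℝ) := by intro i _; ring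
    rw [Finset.prod_congr rfl h2] at h1
    push_cast
    linarith [h1]
  simp only [gru]
  field_simp
  linear_combination h

lemma gru_sum (α : ℝ) (N : ℕ) :
    ∑ k ∈ Finset.range (N + 1), gru α k = gru (α - 1) N := by
  induction N with
  | zero => simp [gru_zero]
  | succ N ih =>
      rw [Finset.sum_range_succ, ih, gru_succ α N, gru_succ (α - 1) N]
      have hrel := gru_rel α N
      have hN1 : ((N : ℝ) + 1) ≠ 0 := by positivity
      field_simp
      linear_combination hrel

lemma gru_two (α : ℝ) : gru α 2 = α * (α - 1) / 2 := by
  rw [show (2:ℕ) = 1 + 1 from rfl, gru_succ, gru_one]; norm_num; ring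

lemma gru_nonneg {α : ℝ} (h1 : 1 ≤ α) (h2 : α ≤ 2) (k : ℕ) : 0 ≤ gru α (k + 2) := by
  induction k with
  | zero => rw [gru_two]; nlinarith
  | succ k ih =>
      rw [show k + 1 + 2 = (k + 2) + 1 from rfl, gru_succ]
      apply mul_nonneg ih
      apply div_nonneg _ (by positivity)
      have : (2:ℝ) ≤ ((k:ℝ) + 2) := by push_cast; linarith [Nat.cast_nonneg (α := ℝ) k]
      push_cast
      linarith

lemma gru_beta_nonpos {β : ℝ} (h0 : 0 ≤ β) (h1 : β ≤ 1) (k : ℕ) : gru β (k + 1) ≤ 0 := by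
  induction k with
  | zero => rw [gru_one]; linarith
  | succ k ih =>
      rw [gru_succ]
      have hk : (0:ℝ) ≤ (((k:ℕ)+1 : ℕ) : ℝ) - β := by
        push_cast
        have := Nat.cast_nonneg (α := ℝ) k
        linarith
      have hd : (0:ℝ) ≤ ((((k:ℕ)+1 : ℕ) : ℝ) - β) / ((((k:ℕ)+1 : ℕ) : ℝ) + 1) := by
        apply div_nonneg hk
        positivity
      exact mul_nonpos_of_nonpos_of_nonneg ih hd

lemma gru_partial {α : ℝ} (h1 : 1 ≤ α) (h2 : α ≤ 2) (N : ℕ) :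
    ∑ k ∈ Finset.range N, gru α (k + 2) ≤ α - 1 := by
  have e : ∑ k ∈ Finset.range (N + 2), gru α k
      = (∑ k ∈ Finset.range N, gru α (k + 2)) + gru α 1 + gru α 0 := by
    rw [Finset.sum_range_succ' (fun k => gru α k) (N+1),
        Finset.sum_range_succ' (fun k => gru α (k+1)) N]
    try ring
  have hs := gru_sum α (N + 1)
  rw [e] at hs
  have hb : gru (α - 1) (N + 1) ≤ 0 := gru_beta_nonpos (by linarith) (by linarith) N
  rw [gru_zero, gru_one] at hs
  linarith

noncomputable def yy (m : ℕ) (x : Fin m → ℝ) : ℕ → ℝ := fun i => if h : i < m then x ⟨i, h⟩ else 0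

variable {m : ℕ} {x : Fin m → ℝ}

lemma yy_zero {i : ℕ} (h : m ≤ i) : yy m x i = 0 := dif_neg (by omega)

lemma yy_fin (i : Fin m) : x i = yy m x i := by simp [yy, i.isLt]

/-- shifted sum of squares bounded by sum of squares -/
lemma shiftsq_le (j : ℕ) :
    ∑ i ∈ range m, yy m x (i + j) * yy m x (i + j) ≤ ∑ i ∈ range m, yy m x i * yy m x i := by
  set y := yy m x
  have h1 : ∑ i ∈ range m, y (i + j) * y (i + j) = ∑ l ∈ Finset.Ico j (j + m), y l * y l := by
    rw [Finset.sum_Ico_eq_sum_range]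
    simp only [Nat.add_sub_cancel_left]
    exact Finset.sum_congr rfl fun i _ => by rw [Nat.add_comm j i]
  rw [h1]
  have h2 : ∑ l ∈ Finset.Ico j (j + m), y l * y l
      = ∑ l ∈ Finset.Ico j (j + m) ∩ range m, y l * y l := by
    apply (Finset.sum_subset Finset.inter_subset_left _).symm
    intro l _ hl
    have : m ≤ l := by
      simp only [Finset.mem_inter, Finset.mem_Ico, Finset.mem_range] at hl ⊢
      by_contra hc
      push_neg at hc
      simp only [Finset.mem_inter, Finset.mem_Ico, Finset.mem_range] at *
      omega
    show yy m x l * yy m x l = 0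
    rw [yy_zero this, mul_zero]
  rw [h2]
  apply Finset.sum_le_sum_of_subset_of_nonneg Finset.inter_subset_right
  intro l _ _
  exact mul_self_nonneg _

/-- correlation bounded by sum of squares -/
lemma corr_le (k : ℕ) :
    ∑ i ∈ range m, yy m x (i + k) * yy m x i ≤ ∑ i ∈ range m, yy m x i * yy m x i := by
  have h : ∀ i ∈ range m, yy m x (i + k) * yy m x i
      ≤ (yy m x (i + k) * yy m x (i + k) + yy m x i * yy m x i) / 2 := by
    intro i _
    nlinarith [sq_nonneg (yy m x (i + k) - yy m x i)]
  calc ∑ i ∈ range m, yy m x (i + k) * yy m x i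
      ≤ ∑ i ∈ range m, (yy m x (i + k) * yy m x (i + k) + yy m x i * yy m x i) / 2 :=
        Finset.sum_le_sum h
    _ = ((∑ i ∈ range m, yy m x (i + k) * yy m x (i + k))
          + ∑ i ∈ range m, yy m x i * yy m x i) / 2 := by
        rw [← Finset.sum_add_distrib, Finset.sum_div]
    _ ≤ ∑ i ∈ range m, yy m x i * yy m x i := by
        have := shiftsq_le (m := m) (x := x) k
        linarith

/-- reindexing: Ico sums to range sums -/
lemma cIco_eq (k : ℕ) :
    ∑ i ∈ Finset.Ico k m, yy m x i * yy m x (i - k)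
      = ∑ i ∈ range m, yy m x (i + k) * yy m x i := by
  rw [Finset.sum_Ico_eq_sum_range]
  have h1 : ∀ j ∈ range (m - k), yy m x (k + j) * yy m x (k + j - k)
      = yy m x (j + k) * yy m x j := by
    intro j _
    rw [Nat.add_sub_cancel_left, Nat.add_comm k j]
  rw [Finset.sum_congr rfl h1]
  apply Finset.sum_subset (Finset.range_subset_range.2 (Nat.sub_le m k))
  intro j _ hj
  have : m ≤ j + k := by
    simp only [Finset.mem_range] at hj
    omega
  rw [yy_zero this, zero_mul]

/-- generic shift of a ℕ-indexed sum -/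
lemma shift_sum (f : ℕ → ℝ) (n : ℕ) :
    ∑ i ∈ range n, f (i + 1) = (∑ i ∈ range n, f i) + f n - f 0 := by
  have h1 := Finset.sum_range_succ' f n
  have h2 := Finset.sum_range_succ f n
  linarith [h1, h2]

lemma sq1_eq :
    ∑ i ∈ range m, yy m x (i + 1) * yy m x (i + 1)
      = (∑ i ∈ range m, yy m x i * yy m x i) - yy m x 0 * yy m x 0 := by
  have := shift_sum (fun i => yy m x i * yy m x i) m
  rw [yy_zero (le_refl m)] at this
  linarith

lemma sq2_eq :
    ∑ i ∈ range m, yy m x (i + 2) * yy m x (i + 2)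
      = (∑ i ∈ range m, yy m x i * yy m x i) - yy m x 0 * yy m x 0 - yy m x 1 * yy m x 1 := by
  have h1 := shift_sum (fun i => yy m x (i + 1) * yy m x (i + 1)) m
  have h2 := sq1_eq (m := m) (x := x)
  rw [yy_zero (by omega : m ≤ m + 1)] at h1
  have : ∑ i ∈ range m, yy m x (i + 1 + 1) * yy m x (i + 1 + 1)
      = ∑ i ∈ range m, yy m x (i + 2) * yy m x (i + 2) := by
    apply Finset.sum_congr rfl; intro i _; norm_num
  linarith [h1, h2, this]

lemma cr1_eq :
    ∑ i ∈ range m, yy m x (i + 1) * yy m x (i + 2)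
      = (∑ i ∈ range m, yy m x i * yy m x (i + 1)) - yy m x 0 * yy m x 1 := by
  have h1 := shift_sum (fun i => yy m x i * yy m x (i + 1)) m
  rw [yy_zero (le_refl m)] at h1
  simp only [zero_mul] at h1
  have : ∑ i ∈ range m, yy m x (i + 1) * yy m x (i + 1 + 1)
      = ∑ i ∈ range m, yy m x (i + 1) * yy m x (i + 2) := by
    apply Finset.sum_congr rfl; intro i _; norm_num
  linarith [h1, this]

/-- identity I1 -/
lemma ident1 :
    2 * ((∑ i ∈ range m, yy m x i * yy m x i) - ∑ i ∈ range m, yy m x i * yy m x (i + 1))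
      = yy m x 0 * yy m x 0 + ∑ i ∈ range m, (yy m x i - yy m x (i + 1))^2 := by
  have he : ∑ i ∈ range m, (yy m x i - yy m x (i + 1))^2
      = (∑ i ∈ range m, yy m x i * yy m x i)
        + (∑ i ∈ range m, yy m x (i+1) * yy m x (i+1))
        - 2 * ∑ i ∈ range m, yy m x i * yy m x (i + 1) := by
    rw [Finset.mul_sum, ← Finset.sum_add_distrib, ← Finset.sum_sub_distrib]
    apply Finset.sum_congr rfl; intro i _; ring
  rw [he, sq1_eq]
  ring

/-- identity I2 -/
lemma ident2 :
    2 * (3 * (∑ i ∈ range m, yy m x i * yy m x i)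
        - 4 * (∑ i ∈ range m, yy m x i * yy m x (i + 1))
        + ∑ i ∈ range m, yy m x (i + 2) * yy m x i)
      = (∑ i ∈ range m, (yy m x i - 2 * yy m x (i + 1) + yy m x (i + 2))^2)
        + (2 * yy m x 0 - yy m x 1)^2 + yy m x 0 * yy m x 0 := by
  have he : ∑ i ∈ range m, (yy m x i - 2 * yy m x (i + 1) + yy m x (i + 2))^2
      = (∑ i ∈ range m, yy m x i * yy m x i)
        + 4 * (∑ i ∈ range m, yy m x (i+1) * yy m x (i+1))
        + (∑ i ∈ range m, yy m x (i+2) * yy m x (i+2))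
        - 4 * (∑ i ∈ range m, yy m x i * yy m x (i + 1))
        - 4 * (∑ i ∈ range m, yy m x (i+1) * yy m x (i + 2))
        + 2 * (∑ i ∈ range m, yy m x (i+2) * yy m x i) := by
    simp only [Finset.mul_sum, ← Finset.sum_add_distrib, ← Finset.sum_sub_distrib]
    apply Finset.sum_congr rfl; intro i _; ring
  rw [he, sq1_eq, sq2_eq, cr1_eq]
  ring

lemma x_eq_zero_of_y (h : ∀ i, yy m x i = 0) : x = 0 := by
  funext j
  have := h j
  rw [← yy_fin j] at this
  · exact this

lemma pos1 (hx : x ≠ 0) :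
    0 < (∑ i ∈ range m, yy m x i * yy m x i) - ∑ i ∈ range m, yy m x i * yy m x (i + 1) := by
  have hid := ident1 (m := m) (x := x)
  have hsum_nonneg : (0:ℝ) ≤ ∑ i ∈ range m, (yy m x i - yy m x (i + 1))^2 :=
    Finset.sum_nonneg fun i _ => sq_nonneg _
  by_contra hc
  push_neg at hc
  have h0 : yy m x 0 * yy m x 0 = 0 ∧ ∑ i ∈ range m, (yy m x i - yy m x (i + 1))^2 = 0 := by
    constructor <;> nlinarith [mul_self_nonneg (yy m x 0)]
  have hy0 : yy m x 0 = 0 := by nlinarith [h0.1]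
  have hstep : ∀ i ∈ range m, yy m x i = yy m x (i + 1) := by
    intro i hi
    have := (Finset.sum_eq_zero_iff_of_nonneg (fun i _ => sq_nonneg _)).1 h0.2 i hi
    have := sq_eq_zero_iff.1 this
    linarith
  have hall : ∀ i, yy m x i = 0 := by
    intro i
    induction i with
    | zero => exact hy0
    | succ i ih =>
        by_cases hi : i < m
        · rw [← hstep i (Finset.mem_range.2 hi)]; exact ih
        · exact yy_zero (by omega)
  exact hx (x_eq_zero_of_y hall)

lemma pos2 (hx : x ≠ 0) :
    0 < 3 * (∑ i ∈ range m, yy m x i * yy m x i)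
        - 4 * (∑ i ∈ range m, yy m x i * yy m x (i + 1))
        + ∑ i ∈ range m, yy m x (i + 2) * yy m x i := by
  have hid := ident2 (m := m) (x := x)
  have hsum_nonneg : (0:ℝ) ≤ ∑ i ∈ range m, (yy m x i - 2 * yy m x (i + 1) + yy m x (i + 2))^2 :=
    Finset.sum_nonneg fun i _ => sq_nonneg _
  by_contra hc
  push_neg at hc
  have h0 : yy m x 0 * yy m x 0 = 0 ∧ (2 * yy m x 0 - yy m x 1)^2 = 0
      ∧ ∑ i ∈ range m, (yy m x i - 2 * yy m x (i + 1) + yy m x (i + 2))^2 = 0 := by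
    refine ⟨?_, ?_, ?_⟩ <;> nlinarith [mul_self_nonneg (yy m x 0), sq_nonneg (2 * yy m x 0 - yy m x 1)]
  have hy0 : yy m x 0 = 0 := by nlinarith [h0.1]
  have hy1 : yy m x 1 = 0 := by
    have := sq_eq_zero_iff.1 h0.2.1
    linarith
  have hstep : ∀ i ∈ range m, yy m x (i + 2) = 2 * yy m x (i + 1) - yy m x i := by
    intro i hi
    have := (Finset.sum_eq_zero_iff_of_nonneg (fun i _ => sq_nonneg _)).1 h0.2.2 i hi
    have := sq_eq_zero_iff.1 this
    linarith
  have hall : ∀ i, yy m x i = 0 ∧ yy m x (i + 1) = 0 := by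
    intro i
    induction i with
    | zero => exact ⟨hy0, hy1⟩
    | succ i ih =>
        refine ⟨ih.2, ?_⟩
        by_cases hi : i < m
        · rw [hstep i (Finset.mem_range.2 hi), ih.1, ih.2]; ring
        · exact yy_zero (by omega)
  exact hx (x_eq_zero_of_y fun i => (hall i).1)

noncomputable def cf (m : ℕ) (x : Fin m → ℝ) : ℕ → ℝ
  | 0 => ∑ i ∈ range m, yy m x i * yy m x (i + 1)
  | (k + 1) => ∑ i ∈ range m, yy m x (i + k) * yy m x i


/-- per-row rewrite -/
lemma row_eq {i : ℕ} (hi : i < m) (w : ℕ → ℝ) :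
    ∑ j ∈ range m, yy m x i * ((if j ≤ i + 1 then w (i + 1 - j) else 0) * yy m x j)
      = ∑ k ∈ range (i + 2), w k * (yy m x i * yy m x (i + 1 - k)) := by
  have hL : ∑ j ∈ range m, yy m x i * ((if j ≤ i + 1 then w (i + 1 - j) else 0) * yy m x j)
      = ∑ j ∈ range m, (if j ≤ i + 1 then yy m x i * (w (i + 1 - j) * yy m x j) else 0) := by
    apply Finset.sum_congr rfl
    intro j _
    by_cases h : j ≤ i + 1 <;> simp [h]
  have hmid : ∑ j ∈ range m, (if j ≤ i + 1 then yy m x i * (w (i + 1 - j) * yy m x j) else 0)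
      = ∑ j ∈ range (i + 2), yy m x i * (w (i + 1 - j) * yy m x j) := by
    rcases lt_or_eq_of_le (Nat.succ_le_of_lt hi) with h | h
    · -- i + 1 < m
      rw [← Finset.sum_subset (Finset.range_subset_range.2 (by omega : i + 2 ≤ m))]
      · apply Finset.sum_congr rfl
        intro j hj
        rw [if_pos (by simpa [Nat.lt_succ_iff] using Finset.mem_range.1 hj)]
      · intro j _ hj
        rw [if_neg (by simp only [Finset.mem_range] at hj; omega)]
    · -- i + 1 = m
      have h2 : i + 2 = m + 1 := by omega
      rw [h2, Finset.sum_range_succ]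
      have hm0 : yy m x i * (w (i + 1 - m) * yy m x m) = 0 := by
        rw [yy_zero (le_refl m)]; ring
      rw [hm0, add_zero]
      apply Finset.sum_congr rfl
      intro j hj
      rw [if_pos (by simp only [Finset.mem_range] at hj; omega)]
  rw [hL, hmid]
  have hrefl := Finset.sum_range_reflect (fun j => yy m x i * (w (i + 1 - j) * yy m x j)) (i + 2)
  have hc : ∑ k ∈ range (i + 2), w k * (yy m x i * yy m x (i + 1 - k))
      = ∑ k ∈ range (i + 2), yy m x i * (w (i + 1 - (i + 2 - 1 - k)) * yy m x (i + 2 - 1 - k)) := by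
    apply Finset.sum_congr rfl
    intro k hk
    have hk' : k ≤ i + 1 := by simpa [Nat.lt_succ_iff] using Finset.mem_range.1 hk
    have e1 : i + 2 - 1 - k = i + 1 - k := by omega
    have e2 : i + 1 - (i + 1 - k) = k := by omega
    rw [e1, e2]
    ring
  rw [hc, hrefl]

/-- Step A: quadratic form as weighted correlation sums -/
lemma quad_eq (w : ℕ → ℝ) :
    x ⬝ᵥ (wsgdMatrix w m).mulVec x = ∑ k ∈ range (m + 1), w k * cf m x k := by
  have h0 : x ⬝ᵥ (wsgdMatrix w m).mulVec x
      = ∑ i ∈ range m, ∑ j ∈ range m,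
          yy m x i * ((if j ≤ i + 1 then w (i + 1 - j) else 0) * yy m x j) := by
    rw [dotProduct, ← Fin.sum_univ_eq_sum_range
      (fun i => ∑ j ∈ range m, yy m x i * ((if j ≤ i + 1 then w (i + 1 - j) else 0) * yy m x j)) m]
    apply Finset.sum_congr rfl
    intro i _
    rw [Matrix.mulVec, dotProduct, Finset.mul_sum, ← Fin.sum_univ_eq_sum_range
      (fun j => yy m x ↑i * ((if j ≤ ↑i + 1 then w (↑i + 1 - j) else 0) * yy m x j)) m]
    apply Finset.sum_congr rfl
    intro j _
    rw [← yy_fin i, ← yy_fin j, wsgdMatrix, Matrix.of_apply]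
    try ring
  rw [h0]
  have h1 : ∑ i ∈ range m, ∑ j ∈ range m,
        yy m x i * ((if j ≤ i + 1 then w (i + 1 - j) else 0) * yy m x j)
      = ∑ i ∈ range m, ∑ k ∈ range (i + 2), w k * (yy m x i * yy m x (i + 1 - k)) := by
    apply Finset.sum_congr rfl
    intro i hi
    exact row_eq (Finset.mem_range.1 hi) w
  rw [h1]
  rw [Finset.sum_comm' (t' := range (m + 1)) (s' := fun k => Finset.Ico (k - 1) m)
    (by intro i k; simp only [Finset.mem_range, Finset.mem_Ico]; omega)]
  apply Finset.sum_congr rfl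
  intro k hk
  rw [← Finset.mul_sum]
  congr 1
  match k with
  | 0 =>
      simp only [cf]
      apply Finset.sum_congr (by simp) (fun i _ => rfl)
  | (k' + 1) =>
      simp only [cf]
      have e : ∀ i ∈ Finset.Ico (k' + 1 - 1) m,
          yy m x i * yy m x (i + 1 - (k' + 1)) = yy m x i * yy m x (i - k') := by
        intro i _
        congr 2
        omega
      rw [Finset.sum_congr rfl e]
      have : k' + 1 - 1 = k' := by omega
      rw [this, cIco_eq]

noncomputable def gd (α : ℝ) (k : ℕ) : ℝ := if 2 ≤ k then gru α (k - 2) else 0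

lemma w1m1_decomp (α : ℝ) (k : ℕ) :
    w1m1 α k = (2 + α) / 4 * gru α k + (2 - α) / 4 * gd α k := by
  match k with
  | 0 => simp [w1m1, gd]
  | 1 => simp [w1m1, gd]
  | (k + 2) => simp [w1m1, gd]

lemma peel2 (f : ℕ → ℝ) (n : ℕ) :
    ∑ k ∈ range (n + 2), f k = f 0 + f 1 + ∑ k ∈ range n, f (k + 2) := by
  rw [Finset.sum_range_succ' f (n + 1), Finset.sum_range_succ' (fun k => f (k + 1)) n]
  ring


section
variable {α : ℝ}

lemma cf_one {m : ℕ} {x : Fin m → ℝ} :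
    cf m x 1 = ∑ i ∈ Finset.range m, yy m x i * yy m x i := by
  show (∑ i ∈ Finset.range m, yy m x (i + 0) * yy m x i) = _
  exact Finset.sum_congr rfl fun i _ => by rw [Nat.add_zero]

lemma cf_two {m : ℕ} {x : Fin m → ℝ} : cf m x 2 = cf m x 0 := by
  show (∑ i ∈ Finset.range m, yy m x (i + 1) * yy m x i)
      = ∑ i ∈ Finset.range m, yy m x i * yy m x (i + 1)
  exact Finset.sum_congr rfl fun i _ => mul_comm _ _

lemma cf_succ_le {m : ℕ} {x : Fin m → ℝ} (k : ℕ) :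
    cf m x (k + 1) ≤ ∑ i ∈ Finset.range m, yy m x i * yy m x i := corr_le k

lemma Ubound (h1 : 1 ≤ α) (h2 : α ≤ 2) (n : ℕ) (x : Fin (n + 1) → ℝ) :
    ∑ k ∈ Finset.range (n + 2), gru α k * cf (n + 1) x k
      ≤ cf (n + 1) x 0 - ∑ i ∈ Finset.range (n + 1), yy (n + 1) x i * yy (n + 1) x i := by
  have hs0 : (0:ℝ) ≤ ∑ i ∈ Finset.range (n + 1), yy (n + 1) x i * yy (n + 1) x i :=
    Finset.sum_nonneg fun i _ => mul_self_nonneg _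
  have hUterm : ∑ k ∈ Finset.range n, gru α (k + 2) * cf (n + 1) x (k + 2)
      ≤ (α - 1) * ∑ i ∈ Finset.range (n + 1), yy (n + 1) x i * yy (n + 1) x i := by
    calc ∑ k ∈ Finset.range n, gru α (k + 2) * cf (n + 1) x (k + 2)
        ≤ ∑ k ∈ Finset.range n,
            gru α (k + 2) * ∑ i ∈ Finset.range (n + 1), yy (n + 1) x i * yy (n + 1) x i := by
          apply Finset.sum_le_sum
          intro k _
          exact mul_le_mul_of_nonneg_left (cf_succ_le (k + 1)) (gru_nonneg h1 h2 k)
      _ = (∑ k ∈ Finset.range n, gru α (k + 2))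
            * ∑ i ∈ Finset.range (n + 1), yy (n + 1) x i * yy (n + 1) x i := by
          rw [Finset.sum_mul]
      _ ≤ _ := mul_le_mul_of_nonneg_right (gru_partial h1 h2 n) hs0
  rw [peel2 (fun k => gru α k * cf (n + 1) x k) n, gru_zero, gru_one, cf_one]
  nlinarith [hUterm]

lemma Vbound (h1 : 1 ≤ α) (h2 : α ≤ 2) (n : ℕ) (x : Fin (n + 1) → ℝ) :
    ∑ k ∈ Finset.range n, gru α k * cf (n + 1) x (k + 2)
      ≤ cf (n + 1) x 0 - α * cf (n + 1) x 3
        + (α - 1) * ∑ i ∈ Finset.range (n + 1), yy (n + 1) x i * yy (n + 1) x i := by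
  have hs0 : (0:ℝ) ≤ ∑ i ∈ Finset.range (n + 1), yy (n + 1) x i * yy (n + 1) x i :=
    Finset.sum_nonneg fun i _ => mul_self_nonneg _
  match n, x with
  | 0, x =>
      have h0 : cf (0 + 1) x 0 = 0 := by
        show (∑ i ∈ Finset.range 1, yy 1 x i * yy 1 x (i + 1)) = 0
        rw [Finset.sum_range_one, yy_zero (le_refl 1), mul_zero]
      have h3 : cf (0 + 1) x 3 = 0 := by
        show (∑ i ∈ Finset.range 1, yy 1 x (i + 2) * yy 1 x i) = 0
        rw [Finset.sum_range_one, yy_zero (by norm_num : 1 ≤ 0 + 2), zero_mul]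
      rw [h0, h3]
      simp only [Finset.range_zero, Finset.sum_empty]
      nlinarith [hs0]
  | 1, x =>
      have h3 : cf (1 + 1) x 3 = 0 := by
        show (∑ i ∈ Finset.range 2, yy 2 x (i + 2) * yy 2 x i) = 0
        rw [Finset.sum_range_succ, Finset.sum_range_one,
          yy_zero (by norm_num : 2 ≤ 0 + 2), yy_zero (by norm_num : 2 ≤ 1 + 2)]
        ring
      rw [h3, Finset.sum_range_one, gru_zero, one_mul, cf_two]
      nlinarith [hs0]
  | (n' + 2), x =>
      rw [peel2 (fun k => gru α k * cf (n' + 2 + 1) x (k + 2)) n', gru_zero, gru_one, cf_two]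
      have hterm : ∑ k ∈ Finset.range n', gru α (k + 2) * cf (n' + 2 + 1) x (k + 2 + 2)
          ≤ (α - 1) * ∑ i ∈ Finset.range (n' + 2 + 1),
              yy (n' + 2 + 1) x i * yy (n' + 2 + 1) x i := by
        calc ∑ k ∈ Finset.range n', gru α (k + 2) * cf (n' + 2 + 1) x (k + 2 + 2)
            ≤ ∑ k ∈ Finset.range n', gru α (k + 2) * ∑ i ∈ Finset.range (n' + 2 + 1),
                yy (n' + 2 + 1) x i * yy (n' + 2 + 1) x i := by
              apply Finset.sum_le_sum
              intro k _
              have := cf_succ_le (m := n' + 2 + 1) (x := x) (k + 3)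
              have e : k + 3 + 1 = k + 2 + 2 := by omega
              rw [e] at this
              exact mul_le_mul_of_nonneg_left this (gru_nonneg h1 h2 k)
          _ = (∑ k ∈ Finset.range n', gru α (k + 2)) * ∑ i ∈ Finset.range (n' + 2 + 1),
                yy (n' + 2 + 1) x i * yy (n' + 2 + 1) x i := by rw [Finset.sum_mul]
          _ ≤ _ := mul_le_mul_of_nonneg_right (gru_partial h1 h2 n') hs0
      nlinarith [hterm]

lemma key {m : ℕ} {x : Fin m → ℝ} (h1 : 1 ≤ α) (h2 : α ≤ 2) (hm : 1 ≤ m) (hx : x ≠ 0) :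
    x ⬝ᵥ (wsgdMatrix (w1m1 α) m).mulVec x < 0 := by
  obtain ⟨n, rfl⟩ : ∃ n, m = n + 1 := ⟨m - 1, by omega⟩
  have hVsum : ∑ k ∈ Finset.range (n + 2), gd α k * cf (n + 1) x k
      = ∑ k ∈ Finset.range n, gru α k * cf (n + 1) x (k + 2) := by
    rw [peel2 (fun k => gd α k * cf (n + 1) x k) n]
    simp only [gd]
    norm_num
  have hU := Ubound h1 h2 n x
  have hV := Vbound h1 h2 n x
  have hQ : x ⬝ᵥ (wsgdMatrix (w1m1 α) (n + 1)).mulVec x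
      ≤ (2 + α) / 4 * (cf (n + 1) x 0
            - ∑ i ∈ Finset.range (n + 1), yy (n + 1) x i * yy (n + 1) x i)
        + (2 - α) / 4 * (cf (n + 1) x 0 - α * cf (n + 1) x 3
            + (α - 1) * ∑ i ∈ Finset.range (n + 1), yy (n + 1) x i * yy (n + 1) x i) := by
    rw [quad_eq (w1m1 α)]
    have hsplit : ∑ k ∈ Finset.range (n + 1 + 1), w1m1 α k * cf (n + 1) x k
        = (2 + α) / 4 * (∑ k ∈ Finset.range (n + 2), gru α k * cf (n + 1) x k)
          + (2 - α) / 4 * (∑ k ∈ Finset.range (n + 2), gd α k * cf (n + 1) x k) := by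
      rw [Finset.mul_sum, Finset.mul_sum, ← Finset.sum_add_distrib]
      apply Finset.sum_congr rfl
      intro k _
      rw [w1m1_decomp]
      ring
    rw [hsplit, hVsum]
    have hA := mul_le_mul_of_nonneg_left hU (by linarith : (0:ℝ) ≤ (2 + α) / 4)
    have hB := mul_le_mul_of_nonneg_left hV (by linarith : (0:ℝ) ≤ (2 - α) / 4)
    linarith
  have hD := pos1 hx
  have hE : 0 < 3 * (∑ i ∈ Finset.range (n + 1), yy (n + 1) x i * yy (n + 1) x i)
      - 4 * cf (n + 1) x 0 + cf (n + 1) x 3 := by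
    have := pos2 (m := n + 1) (x := x) hx
    have e0 : cf (n + 1) x 0 = ∑ i ∈ Finset.range (n + 1), yy (n + 1) x i * yy (n + 1) x (i + 1) := rfl
    have e3 : cf (n + 1) x 3 = ∑ i ∈ Finset.range (n + 1), yy (n + 1) x (i + 2) * yy (n + 1) x i := rfl
    rw [e0, e3]
    linarith
  set S := ∑ i ∈ Finset.range (n + 1), yy (n + 1) x i * yy (n + 1) x i with hS
  set C0 := cf (n + 1) x 0 with hC0
  set C3 := cf (n + 1) x 3 with hC3
  have halg : (2 + α) / 4 * (C0 - S) + (2 - α) / 4 * (C0 - α * C3 + (α - 1) * S)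
      = -((α - 1) ^ 2 * (S - C0)) - (2 - α) * α / 4 * (3 * S - 4 * C0 + C3) := by ring
  rw [halg] at hQ
  have ht : (0:ℝ) ≤ (α - 1) ^ 2 := sq_nonneg _
  have hu : (0:ℝ) ≤ (2 - α) * α / 4 := by nlinarith
  have hkey : (1:ℝ) / 4 ≤ (α - 1) ^ 2 + (2 - α) * α / 4 := by nlinarith [sq_nonneg (α - 1)]
  have hD' : 0 < S - C0 := hD
  have hE' : 0 < 3 * S - 4 * C0 + C3 := hE
  rcases le_total (S - C0) (3 * S - 4 * C0 + C3) with h | h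
  · nlinarith [mul_le_mul_of_nonneg_left h hu, mul_le_mul_of_nonneg_right hkey hD'.le]
  · nlinarith [mul_le_mul_of_nonneg_left h ht, mul_le_mul_of_nonneg_right hkey hE'.le]
end

theorem wsgd1m1_matrix_eigenvalues (α : ℝ) (m : ℕ) (hm : 1 ≤ m) :
    (1 ≤ α → α ≤ 2 →
      ∀ lam : ℂ,
        (∃ v : Fin m → ℂ, v ≠ 0 ∧
          ((wsgdMatrix (w1m1 α) m).map Complex.ofReal).mulVec v = lam • v) → lam.re < 0) ∧
    (1 < α → α ≤ 2 →
      ∀ x : Fin m → ℝ, x ≠ 0 → x ⬝ᵥ (wsgdMatrix (w1m1 α) m).mulVec x < 0) := by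
  constructor
  · intro h1 h2 lam ⟨v, hv, heq⟩
    set A := wsgdMatrix (w1m1 α) m with hA
    set a : Fin m → ℝ := fun i => (v i).re with ha
    set b : Fin m → ℝ := fun i => (v i).im with hb
    have hN : 0 < ∑ i : Fin m, Complex.normSq (v i) := by
      obtain ⟨i0, hi0⟩ := Function.ne_iff.1 hv
      exact Finset.sum_pos' (fun i _ => Complex.normSq_nonneg _)
        ⟨i0, Finset.mem_univ _, Complex.normSq_pos.2 hi0⟩
    -- the complex sesquilinear quantity
    have hmain : lam.re * (∑ i : Fin m, Complex.normSq (v i))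
        = a ⬝ᵥ A.mulVec a + b ⬝ᵥ A.mulVec b := by
      have hS1 : (∑ i : Fin m, (starRingEnd ℂ) (v i) * ((A.map Complex.ofReal).mulVec v i))
          = lam * ((∑ i : Fin m, Complex.normSq (v i) : ℝ) : ℂ) := by
        rw [heq]
        push_cast
        rw [Finset.mul_sum]
        apply Finset.sum_congr rfl
        intro i _
        have : (starRingEnd ℂ) (v i) * (v i) = (Complex.normSq (v i) : ℂ) := by
          rw [mul_comm, Complex.mul_conj]
        simp only [Pi.smul_apply, smul_eq_mul]
        rw [mul_comm (lam) (v i), ← mul_assoc, mul_comm ((starRingEnd ℂ) (v i)) (v i),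
          Complex.mul_conj]
        ring
      have hre1 : (∑ i : Fin m, (starRingEnd ℂ) (v i) * ((A.map Complex.ofReal).mulVec v i)).re
          = lam.re * ∑ i : Fin m, Complex.normSq (v i) := by
        rw [hS1]
        simp
      have hre2 : (∑ i : Fin m, (starRingEnd ℂ) (v i) * ((A.map Complex.ofReal).mulVec v i)).re
          = a ⬝ᵥ A.mulVec a + b ⬝ᵥ A.mulVec b := by
        rw [Complex.re_sum]
        have hterm : ∀ i : Fin m,
            ((starRingEnd ℂ) (v i) * ((A.map Complex.ofReal).mulVec v i)).re
              = ∑ j : Fin m, A i j * (a i * a j + b i * b j) := by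
          intro i
          rw [Matrix.mulVec, dotProduct, Finset.mul_sum, Complex.re_sum]
          apply Finset.sum_congr rfl
          intro j _
          simp only [Matrix.map_apply]
          simp [Complex.mul_re, Complex.mul_im, ha, hb]
          ring
        rw [Finset.sum_congr rfl fun i _ => hterm i]
        rw [dotProduct, dotProduct]
        rw [← Finset.sum_add_distrib]
        apply Finset.sum_congr rfl
        intro i _
        rw [Matrix.mulVec, Matrix.mulVec, dotProduct, dotProduct,
          Finset.mul_sum, Finset.mul_sum, ← Finset.sum_add_distrib]
        apply Finset.sum_congr rfl
        intro j _
        ring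
      rw [← hre1, hre2]
    have hQ : a ⬝ᵥ A.mulVec a + b ⬝ᵥ A.mulVec b < 0 := by
      by_cases hA0 : a = 0
      · have hb0 : b ≠ 0 := by
          intro hb0
          apply hv
          funext i
          have h1 : a i = 0 := congrFun hA0 i
          have h2 : b i = 0 := congrFun hb0 i
          exact Complex.ext h1 h2
        have : a ⬝ᵥ A.mulVec a = 0 := by rw [hA0]; simp
        rw [this, zero_add]
        exact key h1 h2 hm hb0
      · have hQa : a ⬝ᵥ A.mulVec a < 0 := key h1 h2 hm hA0
        have hQb : b ⬝ᵥ A.mulVec b ≤ 0 := by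
          by_cases hb0 : b = 0
          · rw [hb0]; simp
          · exact (key h1 h2 hm hb0).le
        linarith
    nlinarith [hN, hQ, hmain]
  · intro h1 h2 x hx
    exact key h1.le h2 hm hx
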